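/- For n = 4, the number f_4(k) of meaningful k-th order compositions of the differential operations on ℝ⁴ satisfies the recurrence f_4(k) = 2 f_4(k−2) for all k ≥ 3. -/

import Mathlib

/-- Adjacency matrix of the composability digraph of the `n` first-order
differential operations `∇_1, …, ∇_n` on `ℝⁿ` (index `i : Fin n` represents
the operation `∇_{i+1}`): there is an edge `i → j` iff `j = i + 1` or
`i + j = n + 1` (in the 1-based indexing of the paper). -/
def adjA (n : ℕ) : Matrix (Fin n) (Fin n) ℤ :=
  Matrix.of fun i j =>
    if (j : ℕ) = (i : ℕ) + 1 ∨ (i : ℕ) + (j : ℕ) + 2 = n + 1 then 1 else 0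

/-- `fCount n k` is the number of meaningful `k`-th order compositions of the
differential operations on `ℝⁿ`, i.e. the number of sequences
`(i_1, …, i_k) ∈ {1, …, n}^k` each consecutive pair of which is composable. -/
def fCount (n k : ℕ) : ℕ :=
  (Finset.univ.filter fun s : Fin k → Fin n =>
    ∀ i j : Fin k, (j : ℕ) = (i : ℕ) + 1 → adjA n (s i) (s j) = 1).card

lemma pair_card : ∀ v : Fin 4,
    ((Finset.univ : Finset (Fin 4 × Fin 4)).filter
      fun p => adjA 4 v p.1 = 1 ∧ adjA 4 p.1 p.2 = 1).card = 2 := by decide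

lemma valid_iff {k : ℕ} (s : Fin k → Fin 4) :
    (∀ i j : Fin k, (j : ℕ) = (i : ℕ) + 1 → adjA 4 (s i) (s j) = 1) ↔
    (∀ t : ℕ, ∀ h : t + 1 < k,
      adjA 4 (s ⟨t, Nat.lt_of_succ_lt h⟩) (s ⟨t + 1, h⟩) = 1) := by
  constructor
  · intro H t h
    exact H ⟨t, Nat.lt_of_succ_lt h⟩ ⟨t + 1, h⟩ rfl
  · intro H i j hij
    have h : (i : ℕ) + 1 < k := hij ▸ j.isLt
    have := H i h
    have e1 : (⟨(i : ℕ), Nat.lt_of_succ_lt h⟩ : Fin k) = i := Fin.eta ..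
    have e2 : (⟨(i : ℕ) + 1, h⟩ : Fin k) = j := Fin.ext hij.symm
    rwa [e1, e2] at this

def extW (m : ℕ) (w : Fin m → Fin 4) (a b : Fin 4) : Fin (m + 2) → Fin 4 :=
  fun i => if h : (i : ℕ) < m then w ⟨i, h⟩ else if (i : ℕ) = m then a else b

lemma extW_lt (m : ℕ) (w : Fin m → Fin 4) (a b : Fin 4) (i : Fin (m + 2))
    (h : (i : ℕ) < m) : extW m w a b i = w ⟨i, h⟩ := dif_pos h

lemma extW_eq (m : ℕ) (w : Fin m → Fin 4) (a b : Fin 4) (i : Fin (m + 2))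
    (h : (i : ℕ) = m) : extW m w a b i = a := by
  unfold extW
  rw [dif_neg (by omega), if_pos h]

lemma extW_gt (m : ℕ) (w : Fin m → Fin 4) (a b : Fin 4) (i : Fin (m + 2))
    (h : (i : ℕ) = m + 1) : extW m w a b i = b := by
  unfold extW
  rw [dif_neg (by omega), if_neg (by omega)]

lemma fiber_card (kk : ℕ) (w : Fin (kk + 1) → Fin 4)
    (hw : ∀ i j : Fin (kk + 1), (j : ℕ) = (i : ℕ) + 1 → adjA 4 (w i) (w j) = 1) :
    ((Finset.univ.filter fun s : Fin (kk + 1 + 2) → Fin 4 =>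
        ∀ i j : Fin (kk + 1 + 2), (j : ℕ) = (i : ℕ) + 1 → adjA 4 (s i) (s j) = 1).filter
      fun s => (fun i : Fin (kk + 1) => s ⟨(i : ℕ), by omega⟩) = w).card = 2 := by
  classical
  refine Eq.trans (Finset.card_bij'
    (fun s _ => (s ⟨kk + 1, by omega⟩, s ⟨kk + 2, by omega⟩))
    (fun p _ => extW (kk + 1) w p.1 p.2) ?_ ?_ ?_ ?_) (pair_card (w ⟨kk, by omega⟩))
  · -- forward maps into pair set
    intro s hs
    simp only [Finset.mem_filter, Finset.mem_univ, true_and] at hs ⊢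
    obtain ⟨hval, htr⟩ := hs
    have hval' := (valid_iff s).1 hval
    have e0 : w ⟨kk, by omega⟩ = s ⟨kk, by omega⟩ := (congrFun htr ⟨kk, by omega⟩).symm
    refine ⟨?_, hval' (kk + 1) (by omega)⟩
    rw [e0]
    exact hval' kk (by omega)
  · -- backward maps into the fiber
    intro p hp
    simp only [Finset.mem_filter, Finset.mem_univ, true_and] at hp ⊢
    obtain ⟨h1, h2⟩ := hp
    constructor
    · rw [valid_iff]
      intro t ht
      rcases Nat.lt_trichotomy (t + 1) (kk + 1) with h | h | h
      · rw [extW_lt _ _ _ _ ⟨t, Nat.lt_of_succ_lt ht⟩ (show t < kk + 1 by omega),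
            extW_lt _ _ _ _ ⟨t + 1, ht⟩ (show t + 1 < kk + 1 by omega)]
        exact hw ⟨t, by omega⟩ ⟨t + 1, by omega⟩ rfl
      · have htkk : t = kk := by omega
        subst htkk
        rw [extW_lt _ _ _ _ ⟨t, Nat.lt_of_succ_lt ht⟩ (show t < t + 1 by omega),
            extW_eq _ _ _ _ ⟨t + 1, ht⟩ rfl]
        exact h1
      · have htkk : t = kk + 1 := by omega
        subst htkk
        rw [extW_eq _ _ _ _ ⟨kk + 1, Nat.lt_of_succ_lt ht⟩ rfl,
            extW_gt _ _ _ _ ⟨kk + 1 + 1, ht⟩ rfl]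
        exact h2
    · funext i
      rw [extW_lt _ _ _ _ ⟨(i : ℕ), by omega⟩ (show (i : ℕ) < kk + 1 from i.isLt)]
  · -- left inverse
    intro s hs
    simp only [Finset.mem_filter, Finset.mem_univ, true_and] at hs
    obtain ⟨hval, htr⟩ := hs
    funext i
    show extW (kk + 1) w (s ⟨kk + 1, by omega⟩) (s ⟨kk + 2, by omega⟩) i = s i
    rcases Nat.lt_trichotomy (i : ℕ) (kk + 1) with h | h | h
    · rw [extW_lt _ _ _ _ _ h, ← congrFun htr ⟨(i : ℕ), h⟩]
    · rw [extW_eq _ _ _ _ _ h]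
      exact congrArg s (Fin.ext h.symm)
    · have h' : (i : ℕ) = kk + 2 := by omega
      rw [extW_gt _ _ _ _ _ h']
      exact congrArg s (Fin.ext h'.symm)
  · -- right inverse
    intro p hp
    show (extW (kk + 1) w p.1 p.2 ⟨kk + 1, by omega⟩,
          extW (kk + 1) w p.1 p.2 ⟨kk + 2, by omega⟩) = p
    rw [extW_eq _ _ _ _ _ rfl, extW_gt _ _ _ _ _ rfl]

lemma step (kk : ℕ) : fCount 4 (kk + 3) = 2 * fCount 4 (kk + 1) := by
  classical
  show fCount 4 (kk + 1 + 2) = 2 * fCount 4 (kk + 1)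
  unfold fCount
  rw [Finset.card_eq_sum_card_fiberwise
    (f := fun s : Fin (kk + 1 + 2) → Fin 4 => fun i : Fin (kk + 1) => s ⟨(i : ℕ), by omega⟩)
    (t := Finset.univ.filter fun w : Fin (kk + 1) → Fin 4 =>
      ∀ i j : Fin (kk + 1), (j : ℕ) = (i : ℕ) + 1 → adjA 4 (w i) (w j) = 1)]
  · rw [Finset.sum_congr rfl (fun w hw => ?_), Finset.sum_const, smul_eq_mul, Nat.mul_comm]
    simp only [Finset.mem_filter, Finset.mem_univ, true_and] at hw
    exact fiber_card kk w hw
  · intro s hs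
    simp only [Finset.mem_coe, Finset.mem_filter, Finset.mem_univ, true_and] at hs ⊢
    intro i j hij
    exact hs ⟨(i : ℕ), by omega⟩ ⟨(j : ℕ), by omega⟩ hij

/-- For `n = 4`: `f_4(k) = 2 f_4(k-2)` for all `k ≥ 3`. -/
theorem fCount_four_recurrence (k : ℕ) (hk : 3 ≤ k) :
    fCount 4 k = 2 * fCount 4 (k - 2) := by
  obtain ⟨kk, rfl⟩ : ∃ kk, k = kk + 3 := ⟨k - 3, by omega⟩
  have h2 : kk + 3 - 2 = kk + 1 := by omega
  rw [h2]
  exact step kk
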